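/- Let E = ℚ^d and Y = ⊕_i n_i ℤ e_i. The collection of all Y-translates of all faces of the box □^d = ∏_i [0, n_i] is a Y-admissible polytope decomposition of E. -/

import Mathlib

open Set Pointwise

variable {d : ℕ}

/-- A (compact convex, nonempty) polytope in `ℚ^d`: the convex hull of a nonempty finite
set of points. -/
def IsPolytope (σ : Set (Fin d → ℚ)) : Prop :=
  ∃ s : Finset (Fin d → ℚ), s.Nonempty ∧ σ = convexHull ℚ (s : Set (Fin d → ℚ))

/-- The cone `C(σ) ⊆ ℚ ⊕ ℚ^d` over a set `σ ⊆ ℚ^d` placed at height `1`. -/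
def coneOver (σ : Set (Fin d → ℚ)) : Set (ℚ × (Fin d → ℚ)) :=
  {p | ∃ t : ℚ, 0 ≤ t ∧ ∃ x ∈ σ, p = (t, t • x)}

/-- The dual cone of a subset of `ℚ ⊕ ℚ^d`, consisting of all linear functionals that are
nonnegative on it. -/
def dualCone (C : Set (ℚ × (Fin d → ℚ))) : Set ((ℚ × (Fin d → ℚ)) →ₗ[ℚ] ℚ) :=
  {φ | ∀ p ∈ C, 0 ≤ φ p}

/-- A polytope decomposition of `ℚ^d`: a set of polytopes covering `ℚ^d`, closed under
taking faces (nonempty convex extreme subsets), such that any two members meeting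
nontrivially meet in a common face. -/
def IsPolyDecomp (D : Set (Set (Fin d → ℚ))) : Prop :=
  (∀ σ ∈ D, IsPolytope σ) ∧
  (⋃₀ D = Set.univ) ∧
  (∀ σ ∈ D, ∀ τ : Set (Fin d → ℚ), τ.Nonempty → Convex ℚ τ → IsExtreme ℚ σ τ → τ ∈ D) ∧
  (∀ σ ∈ D, ∀ τ ∈ D, (σ ∩ τ).Nonempty →
    IsExtreme ℚ σ (σ ∩ τ) ∧ IsExtreme ℚ τ (σ ∩ τ))

/-- The common refinement `Σ ⊓ Σ'` of two polytope decompositions: all nonempty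
intersections `σ ∩ σ'`. -/
def meetDecomp (D D' : Set (Set (Fin d → ℚ))) : Set (Set (Fin d → ℚ)) :=
  {ρ | ∃ σ ∈ D, ∃ τ ∈ D', (σ ∩ τ).Nonempty ∧ ρ = σ ∩ τ}

/-- A polytope decomposition is `Y`-admissible for a subgroup `Y` of translations if it is
`Y`-stable and has only finitely many `Y`-orbits of cells. -/
def IsAdmissible (Y : AddSubgroup (Fin d → ℚ)) (D : Set (Set (Fin d → ℚ))) : Prop :=
  IsPolyDecomp D ∧
  (∀ y ∈ Y, ∀ σ ∈ D, (fun x => y + x) '' σ ∈ D) ∧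
  ∃ T : Set (Set (Fin d → ℚ)), T.Finite ∧
    ∀ σ ∈ D, ∃ τ ∈ T, ∃ y ∈ Y, σ = (fun x => y + x) '' τ

/-- The lattice `⊕ᵢ nᵢ ℤ eᵢ ⊆ ℚ^d`. -/
def latticeY (n : Fin d → ℚ) : AddSubgroup (Fin d → ℚ) where
  carrier := {y | ∀ i, ∃ k : ℤ, y i = k * n i}
  zero_mem' := fun i => ⟨0, by simp⟩
  add_mem' := by
    rintro a b ha hb i
    obtain ⟨k, hk⟩ := ha i
    obtain ⟨l, hl⟩ := hb i
    exact ⟨k + l, by push_cast [Pi.add_apply, hk, hl]; ring⟩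
  neg_mem' := by
    rintro a ha i
    obtain ⟨k, hk⟩ := ha i
    exact ⟨-k, by push_cast [Pi.neg_apply, hk]; ring⟩

/-- The face of the box `∏ᵢ [0, nᵢ]` determined by a choice `c i ∈ {0, 1, 2}`:
`xᵢ = 0` if `c i = 0`, `xᵢ = nᵢ` if `c i = 1`, and `0 ≤ xᵢ ≤ nᵢ` if `c i = 2`. -/
def boxFace (n : Fin d → ℚ) (c : Fin d → Fin 3) : Set (Fin d → ℚ) :=
  {x | ∀ i, (c i = 0 → x i = 0) ∧ (c i = 1 → x i = n i) ∧
    (c i = 2 → 0 ≤ x i ∧ x i ≤ n i)}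


/-- 1-D face set of the interval `[a, a+m]`. -/
def iSet (a m : ℚ) (c : Fin 3) : Set ℚ :=
  if c = 0 then {a} else if c = 1 then {a + m} else Set.Icc a (a + m)

lemma fin3 (c : Fin 3) : c = 0 ∨ c = 1 ∨ c = 2 := by revert c; decide

@[simp] lemma iSet_zero (a m : ℚ) : iSet a m 0 = {a} := by simp [iSet]
@[simp] lemma iSet_one (a m : ℚ) : iSet a m 1 = {a + m} := by simp [iSet]
@[simp] lemma iSet_two (a m : ℚ) : iSet a m 2 = Set.Icc a (a + m) := by simp [iSet]

lemma iSet_subset_Icc {a m : ℚ} (hm : 0 ≤ m) (c : Fin 3) :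
    iSet a m c ⊆ Set.Icc a (a + m) := by
  rcases fin3 c with h | h | h <;> subst h <;> simp [hm]

lemma isExtreme_Icc_left {a b : ℚ} (h : a ≤ b) : IsExtreme ℚ (Set.Icc a b) {a} := by
  constructor
  · simp [h]
  · rintro x₁ hx₁ x₂ hx₂ x hx ⟨p, q, hp, hq, hpq, hsum⟩
    have hxa : x = a := hx
    rw [hxa] at hsum
    simp only [smul_eq_mul] at hsum
    have key : p * (x₁ - a) + q * (x₂ - a) = 0 := by linear_combination hsum - a * hpq
    have h1 : 0 ≤ x₁ - a := by linarith [hx₁.1]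
    have h2 : 0 ≤ x₂ - a := by linarith [hx₂.1]
    have k1 : p * (x₁ - a) = 0 :=
      le_antisymm (by nlinarith [mul_nonneg hq.le h2]) (mul_nonneg hp.le h1)
    have k2 : q * (x₂ - a) = 0 :=
      le_antisymm (by nlinarith [mul_nonneg hp.le h1]) (mul_nonneg hq.le h2)
    have e1 : x₁ = a := by
      rcases mul_eq_zero.1 k1 with h' | h'
      · exact absurd h' hp.ne'
      · linarith
    have e2 : x₂ = a := by
      rcases mul_eq_zero.1 k2 with h' | h'
      · exact absurd h' hq.ne'
      · linarith
    exact e1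

lemma isExtreme_Icc_right {a b : ℚ} (h : a ≤ b) : IsExtreme ℚ (Set.Icc a b) {b} := by
  constructor
  · simp [h]
  · rintro x₁ hx₁ x₂ hx₂ x hx ⟨p, q, hp, hq, hpq, hsum⟩
    have hxa : x = b := hx
    rw [hxa] at hsum
    simp only [smul_eq_mul] at hsum
    have key : p * (b - x₁) + q * (b - x₂) = 0 := by linear_combination -hsum + b * hpq
    have h1 : 0 ≤ b - x₁ := by linarith [hx₁.2]
    have h2 : 0 ≤ b - x₂ := by linarith [hx₂.2]
    have k1 : p * (b - x₁) = 0 :=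
      le_antisymm (by nlinarith [mul_nonneg hq.le h2]) (mul_nonneg hp.le h1)
    have k2 : q * (b - x₂) = 0 :=
      le_antisymm (by nlinarith [mul_nonneg hp.le h1]) (mul_nonneg hq.le h2)
    have e1 : x₁ = b := by
      rcases mul_eq_zero.1 k1 with h' | h'
      · exact absurd h' hp.ne'
      · linarith
    have e2 : x₂ = b := by
      rcases mul_eq_zero.1 k2 with h' | h'
      · exact absurd h' hq.ne'
      · linarith
    exact e1

/-- The 1-D common-face lemma. -/
lemma oneD_extreme {a b m : ℚ} (hm : 0 < m) (hk : ∃ k : ℤ, b - a = k * m)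
    {c c' : Fin 3} (hne : (iSet a m c ∩ iSet b m c').Nonempty) :
    IsExtreme ℚ (iSet a m c) (iSet a m c ∩ iSet b m c') := by
  obtain ⟨k, hkab⟩ := hk
  obtain ⟨x0, hx0a, hx0b⟩ := hne
  rcases fin3 c with h | h | h <;> subst h
  · have heq : iSet a m 0 ∩ iSet b m c' = iSet a m 0 := by
      apply Set.Subset.antisymm Set.inter_subset_left
      intro z hz
      have hz' : z = a := hz
      have hx0 : x0 = a := hx0a
      rw [hz']; rw [hx0] at hx0b hx0a
      exact ⟨hx0a, hx0b⟩
    rw [heq]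
  · have heq : iSet a m 1 ∩ iSet b m c' = iSet a m 1 := by
      apply Set.Subset.antisymm Set.inter_subset_left
      intro z hz
      have hz' : z = a + m := hz
      have hx0 : x0 = a + m := hx0a
      rw [hz']; rw [hx0] at hx0b hx0a
      exact ⟨hx0a, hx0b⟩
    rw [heq]
  · -- c = 2 : ambient is Icc a (a+m)
    have hIcc : a ≤ x0 ∧ x0 ≤ a + m := by simpa using hx0a
    have key : iSet a m 2 ∩ iSet b m c' = Set.Icc a (a + m) ∨
        iSet a m 2 ∩ iSet b m c' = {a} ∨ iSet a m 2 ∩ iSet b m c' = {a + m} := by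
      rcases fin3 c' with h' | h' | h' <;> subst h' <;>
        simp only [iSet_zero, iSet_one, iSet_two] at hx0b ⊢
      · -- intersection with {b}
        have hx0 : x0 = b := hx0b
        rw [hx0] at hIcc
        have h1 : 0 ≤ (k : ℚ) := by nlinarith [hIcc.1]
        have h2 : (k : ℚ) ≤ 1 := by nlinarith [hIcc.2]
        have hk01 : k = 0 ∨ k = 1 := by
          have g1 : (0:ℤ) ≤ k := by exact_mod_cast h1
          have g2 : k ≤ 1 := by exact_mod_cast h2
          omega
        rcases hk01 with rfl | rfl
        · right; left
          have hba : b = a := by push_cast at hkab; linarith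
          ext z
          simp only [Set.mem_inter_iff, Set.mem_singleton_iff, Set.mem_Icc]
          constructor
          · rintro ⟨_, hz⟩; rw [hz, hba]
          · rintro rfl; exact ⟨⟨le_refl _, by linarith⟩, hba.symm⟩
        · right; right
          have hba : b = a + m := by push_cast at hkab; linarith
          ext z
          simp only [Set.mem_inter_iff, Set.mem_singleton_iff, Set.mem_Icc]
          constructor
          · rintro ⟨_, hz⟩; rw [hz, hba]
          · rintro rfl; exact ⟨⟨by linarith, le_refl _⟩, hba.symm⟩
      · -- intersection with {b + m}
        have hx0 : x0 = b + m := hx0b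
        rw [hx0] at hIcc
        have h1 : (-1 : ℚ) ≤ (k : ℚ) := by nlinarith [hIcc.1]
        have h2 : (k : ℚ) ≤ 0 := by nlinarith [hIcc.2]
        have hk01 : k = -1 ∨ k = 0 := by
          have g1 : (-1:ℤ) ≤ k := by exact_mod_cast h1
          have g2 : k ≤ 0 := by exact_mod_cast h2
          omega
        rcases hk01 with rfl | rfl
        · right; left
          have hba : b + m = a := by push_cast at hkab; linarith
          ext z
          simp only [Set.mem_inter_iff, Set.mem_singleton_iff, Set.mem_Icc]
          constructor
          · rintro ⟨_, hz⟩; rw [hz, hba]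
          · rintro rfl; exact ⟨⟨le_refl _, by linarith⟩, hba.symm⟩
        · right; right
          have hba : b + m = a + m := by push_cast at hkab; linarith
          ext z
          simp only [Set.mem_inter_iff, Set.mem_singleton_iff, Set.mem_Icc]
          constructor
          · rintro ⟨_, hz⟩; rw [hz, hba]
          · rintro rfl; exact ⟨⟨by linarith, le_refl _⟩, hba.symm⟩
      · -- intersection of two intervals
        have hb1 : b ≤ x0 := hx0b.1
        have hb2 : x0 ≤ b + m := hx0b.2
        have h1 : (-1 : ℚ) ≤ (k : ℚ) := by nlinarith [hIcc.1]
        have h2 : (k : ℚ) ≤ 1 := by nlinarith [hIcc.2]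
        have hk01 : k = -1 ∨ k = 0 ∨ k = 1 := by
          have g1 : (-1:ℤ) ≤ k := by exact_mod_cast h1
          have g2 : k ≤ 1 := by exact_mod_cast h2
          omega
        rcases hk01 with rfl | rfl | rfl
        · right; left
          have hba : b + m = a := by push_cast at hkab; linarith
          ext z
          simp only [Set.mem_inter_iff, Set.mem_singleton_iff, Set.mem_Icc]
          constructor
          · rintro ⟨hz1, hz2⟩; linarith [hz1.1, hz2.2]
          · rintro rfl; exact ⟨⟨le_refl _, by linarith⟩, ⟨by linarith, by linarith⟩⟩
        · left
          have hba : b = a := by push_cast at hkab; linarith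
          rw [hba]
          simp
        · right; right
          have hba : b = a + m := by push_cast at hkab; linarith
          ext z
          simp only [Set.mem_inter_iff, Set.mem_singleton_iff, Set.mem_Icc]
          constructor
          · rintro ⟨hz1, hz2⟩; linarith [hz1.2, hz2.1]
          · rintro rfl; exact ⟨⟨by linarith, le_refl _⟩, ⟨by linarith, by linarith⟩⟩
    rcases key with hk' | hk' | hk'
    · rw [hk', iSet_two]
    · rw [hk', iSet_two]; exact isExtreme_Icc_left (by linarith)
    · rw [hk', iSet_two]; exact isExtreme_Icc_right (by linarith)

/-- Coordinatewise product sets. -/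
def cwSet (A : Fin d → Set ℚ) : Set (Fin d → ℚ) := {x | ∀ i, x i ∈ A i}

lemma pi_isExtreme {A B : Fin d → Set ℚ} (h : ∀ i, IsExtreme ℚ (A i) (B i)) :
    IsExtreme ℚ (cwSet A) (cwSet B) := by
  constructor
  · intro x hx i; exact (h i).1 (hx i)
  · intro x₁ h₁ x₂ h₂ x hx ⟨p, q, hp, hq, hpq, hz⟩
    intro i <;>
    · have hxi : p * x₁ i + q * x₂ i = x i := by
        have := congrFun hz i
        simpa [smul_eq_mul] using this
      rcases eq_or_ne (x₁ i) (x₂ i) with he | he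
      · have e1 : x i = x₁ i := by rw [← hxi, he]; linear_combination (x₂ i) * hpq
        first
          | exact e1 ▸ hx i
          | · have e2 : x i = x₂ i := by rw [← hxi, ← he]; linear_combination (x₁ i) * hpq
              exact e2 ▸ hx i
      · have hop : x i ∈ openSegment ℚ (x₁ i) (x₂ i) := ⟨p, q, hp, hq, hpq, hxi⟩
        first
          | exact (h i).2 (h₁ i) (h₂ i) (hx i) hop
          | exact ((h i).2 (h₁ i) (h₂ i) (hx i) hop).2

/-- The coordinatewise description of a translated box face. -/
def fc (n y : Fin d → ℚ) (c : Fin d → Fin 3) : Set (Fin d → ℚ) :=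
  cwSet (fun i => iSet (y i) (n i) (c i))

lemma mem_fc {n y : Fin d → ℚ} {c : Fin d → Fin 3} {x : Fin d → ℚ} :
    x ∈ fc n y c ↔ ∀ i, x i ∈ iSet (y i) (n i) (c i) := Iff.rfl

lemma boxFace_eq_fc (n : Fin d → ℚ) (c : Fin d → Fin 3) :
    boxFace n c = fc n 0 c := by
  ext x
  simp only [boxFace, Set.mem_setOf_eq, mem_fc]
  constructor
  · intro h i
    rcases fin3 (c i) with hc | hc | hc <;> rw [hc] <;> simp [Pi.zero_apply]
    · exact (h i).1 hc
    · exact (h i).2.1 hc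
    · exact (h i).2.2 hc
  · intro h i
    have := h i
    refine ⟨fun hc => ?_, fun hc => ?_, fun hc => ?_⟩ <;> rw [hc] at this <;>
      simpa [Pi.zero_apply] using this

lemma image_fc (n y y' : Fin d → ℚ) (c : Fin d → Fin 3) :
    (fun x => y + x) '' fc n y' c = fc n (fun i => y i + y' i) c := by
  have iSet_shift : ∀ (a b m z : ℚ) (cc : Fin 3), z - a ∈ iSet b m cc ↔ z ∈ iSet (a + b) m cc := by
    intro a b m z cc
    rcases fin3 cc with hc | hc | hc <;> rw [hc] <;>
      simp only [iSet_zero, iSet_one, iSet_two, Set.mem_singleton_iff, Set.mem_Icc] <;>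
      constructor <;> intro hh <;> first | linarith | constructor <;> linarith
  ext x
  simp only [Set.mem_image, mem_fc]
  constructor
  · rintro ⟨u, hu, rfl⟩ i
    have := (iSet_shift (y i) (y' i) (n i) (y i + u i) (c i)).1 (by simpa using hu i)
    simpa using this
  · intro h
    refine ⟨fun i => x i - y i, fun i => ?_, ?_⟩
    · exact (iSet_shift (y i) (y' i) (n i) (x i) (c i)).2 (h i)
    · funext i; simp only [Pi.add_apply]; ring

lemma isPolytope_fc {n : Fin d → ℚ} (hn : ∀ i, 0 ≤ n i) (y : Fin d → ℚ) (c : Fin d → Fin 3) :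
    IsPolytope (fc n y c) := by
  classical
  set lo : Fin d → ℚ := fun i => if c i = 1 then y i + n i else y i with hlo
  set hi : Fin d → ℚ := fun i => if c i = 0 then y i else y i + n i with hhi
  have hle : ∀ i, lo i ≤ hi i := by
    intro i
    rcases fin3 (c i) with hc | hc | hc <;> simp [hlo, hhi, hc, hn i]
  have hfc : fc n y c = Set.pi Set.univ (fun i => Set.Icc (lo i) (hi i)) := by
    ext x
    simp only [mem_fc, Set.mem_pi, Set.mem_univ, true_implies]
    refine forall_congr' fun i => ?_
    rcases fin3 (c i) with hc | hc | hc <;>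
      simp [hlo, hhi, hc, Set.Icc_self]
  refine ⟨Finset.image (fun ε : Fin d → Bool => fun i => if ε i then hi i else lo i)
    Finset.univ, ⟨_, Finset.mem_image_of_mem _ (Finset.mem_univ (fun _ => true))⟩, ?_⟩
  have hset : ((Finset.image (fun ε : Fin d → Bool => fun i => if ε i then hi i else lo i)
      Finset.univ : Finset (Fin d → ℚ)) : Set (Fin d → ℚ))
      = Set.pi Set.univ (fun i => {lo i, hi i}) := by
    ext x
    simp only [Finset.coe_image, Finset.coe_univ, Set.image_univ, Set.mem_range,
      Set.mem_pi, Set.mem_univ, true_implies, Set.mem_insert_iff, Set.mem_singleton_iff]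
    constructor
    · rintro ⟨ε, rfl⟩ i
      by_cases hε : ε i <;> simp [hε]
    · intro h
      refine ⟨fun i => decide (x i = hi i), funext fun i => ?_⟩
      by_cases hxi : x i = hi i <;> simp [hxi]
      rcases h i with h' | h'
      · exact h'.symm
      · exact absurd h' hxi
  rw [hset, convexHull_pi, hfc]
  have hpair : ∀ i, convexHull ℚ ({lo i, hi i} : Set ℚ) = Set.Icc (lo i) (hi i) :=
    fun i => by rw [convexHull_pair, segment_eq_Icc (hle i)]
  simp only [hpair]

lemma covering_fc {n : Fin d → ℚ} (hn : ∀ i, 0 < n i) (x : Fin d → ℚ) :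
    ∃ y : Fin d → ℚ, (∀ i, ∃ k : ℤ, y i = k * n i) ∧ x ∈ fc n y (fun _ => 2) := by
  refine ⟨fun i => (⌊x i / n i⌋ : ℚ) * n i, fun i => ⟨⌊x i / n i⌋, rfl⟩, fun i => ?_⟩
  simp only [iSet_two, Set.mem_Icc]
  have h1 : (⌊x i / n i⌋ : ℚ) ≤ x i / n i := Int.floor_le _
  have h2 : x i / n i < (⌊x i / n i⌋ : ℚ) + 1 := Int.lt_floor_add_one _
  have hni := hn i
  constructor
  · calc (⌊x i / n i⌋ : ℚ) * n i ≤ (x i / n i) * n i := by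
          exact mul_le_mul_of_nonneg_right h1 hni.le
      _ = x i := by field_simp
  · have hxi : (x i / n i) * n i = x i := by field_simp
    have hmul := mul_le_mul_of_nonneg_right h2.le hni.le
    have hexp : ((⌊x i / n i⌋ : ℚ) + 1) * n i = (⌊x i / n i⌋ : ℚ) * n i + n i := by ring
    linarith

lemma extreme_eq_fc {n : Fin d → ℚ} (hn : ∀ i, 0 < n i) (y : Fin d → ℚ) (c : Fin d → Fin 3)
    {τ : Set (Fin d → ℚ)} (hne : τ.Nonempty) (hconv : Convex ℚ τ)
    (hext : IsExtreme ℚ (fc n y c) τ) :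
    ∃ c' : Fin d → Fin 3, τ = fc n y c' := by
  classical
  set c' : Fin d → Fin 3 := fun i =>
    if (∃ x ∈ τ, y i < x i ∧ x i < y i + n i) then 2
    else if (∃ x ∈ τ, x i = y i + n i) then 1 else 0 with hc'def
  have hsub : τ ⊆ fc n y c := hext.1
  have hIcc : ∀ x ∈ τ, ∀ i, y i ≤ x i ∧ x i ≤ y i + n i := by
    intro x hx i
    have := iSet_subset_Icc (hn i).le (c i) (hsub hx i)
    simpa using this
  have hc'cases : ∀ i, (c' i = 2 ∧ ∃ x ∈ τ, y i < x i ∧ x i < y i + n i) ∨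
      (c' i = 1 ∧ (¬ ∃ x ∈ τ, y i < x i ∧ x i < y i + n i) ∧ ∃ x ∈ τ, x i = y i + n i) ∨
      (c' i = 0 ∧ (¬ ∃ x ∈ τ, y i < x i ∧ x i < y i + n i) ∧ ¬ ∃ x ∈ τ, x i = y i + n i) := by
    intro i
    by_cases h1 : ∃ x ∈ τ, y i < x i ∧ x i < y i + n i
    · left; exact ⟨by simp [hc'def, h1], h1⟩
    · by_cases h2 : ∃ x ∈ τ, x i = y i + n i
      · right; left; exact ⟨by simp [hc'def, h1, h2], h1, h2⟩
      · right; right; exact ⟨by simp [hc'def, h1, h2], h1, h2⟩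
  have hdich : ∀ x ∈ τ, ∀ i, (¬ ∃ x' ∈ τ, y i < x' i ∧ x' i < y i + n i) →
      x i = y i ∨ x i = y i + n i := by
    intro x hx i hni
    have hb := hIcc x hx i
    rcases eq_or_lt_of_le hb.1 with he | hlt
    · exact Or.inl he.symm
    rcases eq_or_lt_of_le hb.2 with he | hlt2
    · exact Or.inr he
    · exact absurd ⟨x, hx, hlt, hlt2⟩ hni
  -- τ is contained in the face given by c'
  have hτc' : τ ⊆ fc n y c' := by
    intro x hx i
    show x i ∈ iSet (y i) (n i) (c' i)
    rcases hc'cases i with ⟨h2, hint⟩ | ⟨h1, hnint, htop⟩ | ⟨h0, hnint, hntop⟩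
    · rw [h2]; simp only [iSet_two, Set.mem_Icc]; exact hIcc x hx i
    · rw [h1]; simp only [iSet_one, Set.mem_singleton_iff]
      rcases hdich x hx i hnint with he | he
      · exfalso
        obtain ⟨x', hx', hx'top⟩ := htop
        have hm : (1/2 : ℚ) • x + (1/2 : ℚ) • x' ∈ τ :=
          hconv hx hx' (by norm_num) (by norm_num) (by norm_num)
        have hmi : ((1/2 : ℚ) • x + (1/2 : ℚ) • x') i = (1/2) * x i + (1/2) * x' i := by
          simp [smul_eq_mul]
        refine hnint ⟨_, hm, ?_, ?_⟩ <;> rw [hmi, he, hx'top] <;> linarith [hn i]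
      · exact he
    · rw [h0]; simp only [iSet_zero, Set.mem_singleton_iff]
      rcases hdich x hx i hnint with he | he
      · exact he
      · exact absurd ⟨x, hx, he⟩ hntop
  -- compatibility of c and c'
  have hcc' : ∀ i, (c i = 0 → c' i = 0) ∧ (c i = 1 → c' i = 1) := by
    intro i
    constructor
    · intro hc0
      have hall : ∀ x ∈ τ, x i = y i := by
        intro x hx
        have h' : x i ∈ iSet (y i) (n i) (c i) := hsub hx i
        rw [hc0] at h'; simpa using h'
      have hnint : ¬ ∃ x ∈ τ, y i < x i ∧ x i < y i + n i := by
        rintro ⟨x, hx, h1, _⟩; rw [hall x hx] at h1; exact lt_irrefl _ h1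
      have hntop : ¬ ∃ x ∈ τ, x i = y i + n i := by
        rintro ⟨x, hx, h1⟩; rw [hall x hx] at h1; linarith [hn i]
      rcases hc'cases i with ⟨_, hint⟩ | ⟨_, _, htop⟩ | ⟨h0, _, _⟩
      · exact absurd hint hnint
      · exact absurd htop hntop
      · exact h0
    · intro hc1
      have hall : ∀ x ∈ τ, x i = y i + n i := by
        intro x hx
        have h' : x i ∈ iSet (y i) (n i) (c i) := hsub hx i
        rw [hc1] at h'; simpa using h'
      have hnint : ¬ ∃ x ∈ τ, y i < x i ∧ x i < y i + n i := by
        rintro ⟨x, hx, _, h2⟩; rw [hall x hx] at h2; exact lt_irrefl _ h2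
      have htop : ∃ x ∈ τ, x i = y i + n i := by
        obtain ⟨x, hx⟩ := hne; exact ⟨x, hx, hall x hx⟩
      rcases hc'cases i with ⟨_, hint⟩ | ⟨h1, _, _⟩ | ⟨_, _, hntop⟩
      · exact absurd hint hnint
      · exact h1
      · exact absurd htop hntop
  -- a point of τ interior in all the free directions
  have hz' : ∀ S : Finset (Fin d), ∃ z ∈ τ,
      ∀ i ∈ S, c' i = 2 → y i < z i ∧ z i < y i + n i := by
    intro S
    induction S using Finset.induction_on with
    | empty => obtain ⟨z, hz⟩ := hne; exact ⟨z, hz, by simp⟩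
    | @insert i S hiS ih =>
      obtain ⟨z, hzτ, hzS⟩ := ih
      by_cases hi2 : c' i = 2
      · have hint : ∃ x ∈ τ, y i < x i ∧ x i < y i + n i := by
          rcases hc'cases i with ⟨_, hint⟩ | ⟨h1, _, _⟩ | ⟨h0, _, _⟩
          · exact hint
          · rw [h1] at hi2; exact absurd hi2 (by decide)
          · rw [h0] at hi2; exact absurd hi2 (by decide)
        obtain ⟨x, hxτ, hx1, hx2⟩ := hint
        refine ⟨(1/2 : ℚ) • x + (1/2 : ℚ) • z,
          hconv hxτ hzτ (by norm_num) (by norm_num) (by norm_num), ?_⟩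
        intro j hj hj2
        have happ : ((1/2 : ℚ) • x + (1/2 : ℚ) • z) j = (1/2) * x j + (1/2) * z j := by
          simp [smul_eq_mul]
        have hxj := hIcc x hxτ j
        have hzj := hIcc z hzτ j
        rcases Finset.mem_insert.1 hj with rfl | hjS
        · constructor <;> rw [happ] <;> linarith
        · have := hzS j hjS hj2
          constructor <;> rw [happ] <;> linarith
      · refine ⟨z, hzτ, ?_⟩
        intro j hj hj2
        rcases Finset.mem_insert.1 hj with rfl | hjS
        · exact absurd hj2 hi2
        · exact hzS j hjS hj2
  obtain ⟨z, hzτ, hzS⟩ := hz' Finset.univ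
  have hzint : ∀ i, c' i = 2 → y i < z i ∧ z i < y i + n i :=
    fun i h => hzS i (Finset.mem_univ i) h
  -- a sufficiently small positive t
  have ht' : ∀ S : Finset (Fin d), ∃ t : ℚ, 0 < t ∧
      ∀ i ∈ S, c' i = 2 → t * n i ≤ z i - y i ∧ t * n i ≤ y i + n i - z i := by
    intro S
    induction S using Finset.induction_on with
    | empty => exact ⟨1, one_pos, by simp⟩
    | @insert i S hiS ih =>
      obtain ⟨t, ht, hS⟩ := ih
      by_cases hi2 : c' i = 2
      · have hzi := hzint i hi2
        refine ⟨min t (min ((z i - y i) / n i) ((y i + n i - z i) / n i)), ?_, ?_⟩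
        · exact lt_min ht (lt_min (div_pos (by linarith [hzi.1]) (hn i))
            (div_pos (by linarith [hzi.2]) (hn i)))
        · intro j hj hj2
          rcases Finset.mem_insert.1 hj with rfl | hjS
          · constructor
            · have h1 : min t (min ((z j - y j) / n j) ((y j + n j - z j) / n j)) ≤
                  (z j - y j) / n j := le_trans (min_le_right _ _) (min_le_left _ _)
              calc min t (min ((z j - y j) / n j) ((y j + n j - z j) / n j)) * n j
                  ≤ ((z j - y j) / n j) * n j := mul_le_mul_of_nonneg_right h1 (hn j).le
                _ = z j - y j := div_mul_cancel₀ _ (hn j).ne'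
            · have h1 : min t (min ((z j - y j) / n j) ((y j + n j - z j) / n j)) ≤
                  (y j + n j - z j) / n j := le_trans (min_le_right _ _) (min_le_right _ _)
              calc min t (min ((z j - y j) / n j) ((y j + n j - z j) / n j)) * n j
                  ≤ ((y j + n j - z j) / n j) * n j := mul_le_mul_of_nonneg_right h1 (hn j).le
                _ = y j + n j - z j := div_mul_cancel₀ _ (hn j).ne'
          · have hb := hS j hjS hj2
            have h1 : min t (min ((z i - y i) / n i) ((y i + n i - z i) / n i)) * n j ≤
                t * n j := mul_le_mul_of_nonneg_right (min_le_left _ _) (hn j).le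
            exact ⟨le_trans h1 hb.1, le_trans h1 hb.2⟩
      · refine ⟨t, ht, ?_⟩
        intro j hj hj2
        rcases Finset.mem_insert.1 hj with rfl | hjS
        · exact absurd hj2 hi2
        · exact hS j hjS hj2
  obtain ⟨t, ht, htS⟩ := ht' Finset.univ
  have htb : ∀ i, c' i = 2 → t * n i ≤ z i - y i ∧ t * n i ≤ y i + n i - z i :=
    fun i h => htS i (Finset.mem_univ i) h
  -- conclusion
  refine ⟨c', Set.Subset.antisymm hτc' ?_⟩
  intro w hw
  set w' : Fin d → ℚ := fun i => z i + t * (z i - w i) with hw'def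
  have hwIcc : ∀ i, y i ≤ w i ∧ w i ≤ y i + n i := by
    intro i
    have := iSet_subset_Icc (hn i).le (c' i) (hw i)
    simpa using this
  have hzc' : z ∈ fc n y c' := hτc' hzτ
  have hval : ∀ i, (c' i = 0 → w i = y i ∧ z i = y i) ∧
      (c' i = 1 → w i = y i + n i ∧ z i = y i + n i) := by
    intro i
    refine ⟨fun hci => ⟨?_, ?_⟩, fun hci => ⟨?_, ?_⟩⟩
    · have h' : w i ∈ iSet (y i) (n i) (c' i) := hw i
      rw [hci] at h'; simpa using h'
    · have h' : z i ∈ iSet (y i) (n i) (c' i) := hzc' i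
      rw [hci] at h'; simpa using h'
    · have h' : w i ∈ iSet (y i) (n i) (c' i) := hw i
      rw [hci] at h'; simpa using h'
    · have h' : z i ∈ iSet (y i) (n i) (c' i) := hzc' i
      rw [hci] at h'; simpa using h'
  have hw'mem : w' ∈ fc n y c := by
    intro i
    show w' i ∈ iSet (y i) (n i) (c i)
    rcases fin3 (c i) with hc | hc | hc
    · have h0 := (hcc' i).1 hc
      obtain ⟨hwi, hzi⟩ := (hval i).1 h0
      rw [hc]; simp [hw'def, hwi, hzi]
    · have h1 := (hcc' i).2 hc
      obtain ⟨hwi, hzi⟩ := (hval i).2 h1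
      rw [hc]; simp [hw'def, hwi, hzi]
    · rw [hc]; simp only [iSet_two, Set.mem_Icc]
      rcases fin3 (c' i) with hc' | hc' | hc'
      · obtain ⟨hwi, hzi⟩ := (hval i).1 hc'
        constructor <;> simp only [hw'def, hwi, hzi] <;> simp <;> linarith [hn i]
      · obtain ⟨hwi, hzi⟩ := (hval i).2 hc'
        constructor <;> simp only [hw'def, hwi, hzi] <;> simp <;> linarith [hn i]
      · have hzi := hzint i hc'
        have hb := htb i hc'
        have hwi := hwIcc i
        have e1 : t * (z i - w i) = -(t * (w i - z i)) := by ring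
        have p1 : t * (w i - z i) ≤ t * n i :=
          mul_le_mul_of_nonneg_left (by linarith [hwi.2, hzi.1]) ht.le
        have p2 : t * (z i - w i) ≤ t * n i :=
          mul_le_mul_of_nonneg_left (by linarith [hwi.1, hzi.2]) ht.le
        constructor <;> simp only [hw'def] <;> linarith [hb.1, hb.2]
  have hwσ : w ∈ fc n y c := by
    intro i
    show w i ∈ iSet (y i) (n i) (c i)
    rcases fin3 (c i) with hc | hc | hc
    · have h0 := (hcc' i).1 hc
      obtain ⟨hwi, _⟩ := (hval i).1 h0
      rw [hc]; simpa using hwi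
    · have h1 := (hcc' i).2 hc
      obtain ⟨hwi, _⟩ := (hval i).2 h1
      rw [hc]; simpa using hwi
    · rw [hc]; simp only [iSet_two, Set.mem_Icc]; exact hwIcc i
  have h1t : (0:ℚ) < 1 + t := by linarith
  have hseg : z ∈ openSegment ℚ w w' := by
    refine ⟨t / (1 + t), 1 / (1 + t), by positivity, by positivity, ?_, ?_⟩
    · field_simp; ring
    · funext i
      simp only [Pi.add_apply, Pi.smul_apply, smul_eq_mul, hw'def]
      field_simp
      ring
  exact hext.2 hwσ hw'mem hzτ hseg

lemma fc_inter_extreme {n : Fin d → ℚ} (hn : ∀ i, 0 < n i) {y y' : Fin d → ℚ}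
    (hk : ∀ i, ∃ k : ℤ, y' i - y i = k * n i) {c c' : Fin d → Fin 3}
    (hne : (fc n y c ∩ fc n y' c').Nonempty) :
    IsExtreme ℚ (fc n y c) (fc n y c ∩ fc n y' c') := by
  obtain ⟨x0, hx0⟩ := hne
  have heq : fc n y c ∩ fc n y' c' =
      cwSet (fun i => iSet (y i) (n i) (c i) ∩ iSet (y' i) (n i) (c' i)) := by
    ext x
    simp only [Set.mem_inter_iff, mem_fc, cwSet, Set.mem_setOf_eq]
    exact ⟨fun ⟨h1, h2⟩ i => ⟨h1 i, h2 i⟩, fun h => ⟨fun i => (h i).1, fun i => (h i).2⟩⟩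
  rw [heq]
  exact pi_isExtreme fun i => oneD_extreme (hn i) (hk i) ⟨x0 i, hx0.1 i, hx0.2 i⟩

lemma mem_latticeY {n y : Fin d → ℚ} : y ∈ latticeY n ↔ ∀ i, ∃ k : ℤ, y i = k * n i :=
  Iff.rfl

/-- Let `Y = ⊕ᵢ nᵢ ℤ eᵢ ⊆ ℚ^d` with `nᵢ` positive integers.  The
collection of all `Y`-translates of all faces of the box `□^d = ∏ᵢ [0, nᵢ]` is a
`Y`-admissible polytope decomposition of `ℚ^d`. -/
theorem box_translates_isAdmissible (n : Fin d → ℕ) (hn : ∀ i, 0 < n i) :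
    IsAdmissible (latticeY fun i => (n i : ℚ))
      {σ | ∃ y ∈ latticeY (fun i => (n i : ℚ)), ∃ c : Fin d → Fin 3,
        σ = (fun x => y + x) '' boxFace (fun i => (n i : ℚ)) c} := by
  set nq : Fin d → ℚ := fun i => (n i : ℚ) with hnqdef
  have hnq : ∀ i, 0 < nq i := by
    intro i
    simp only [hnqdef]
    exact_mod_cast hn i
  have hmem : ∀ σ : Set (Fin d → ℚ),
      (σ ∈ {σ | ∃ y ∈ latticeY nq, ∃ c : Fin d → Fin 3, σ = (fun x => y + x) '' boxFace nq c})
      ↔ ∃ y, (∀ i, ∃ k : ℤ, y i = k * nq i) ∧ ∃ c : Fin d → Fin 3, σ = fc nq y c := by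
    intro σ
    constructor
    · rintro ⟨y, hy, c, rfl⟩
      refine ⟨y, mem_latticeY.1 hy, c, ?_⟩
      rw [boxFace_eq_fc, image_fc]
      simp only [Pi.zero_apply, add_zero]
    · rintro ⟨y, hy, c, rfl⟩
      refine ⟨y, mem_latticeY.2 hy, c, ?_⟩
      rw [boxFace_eq_fc, image_fc]
      simp only [Pi.zero_apply, add_zero]
  refine ⟨⟨?_, ?_, ?_, ?_⟩, ?_, ?_⟩
  · -- polytopes
    intro σ hσ
    obtain ⟨y, _, c, rfl⟩ := (hmem σ).1 hσ
    exact isPolytope_fc (fun i => (hnq i).le) y c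
  · -- covering
    apply Set.eq_univ_of_forall
    intro x
    obtain ⟨y, hy, hx⟩ := covering_fc hnq x
    exact ⟨fc nq y (fun _ => 2), (hmem _).2 ⟨y, hy, _, rfl⟩, hx⟩
  · -- faces
    intro σ hσ τ hτne hτconv hext
    obtain ⟨y, hy, c, rfl⟩ := (hmem σ).1 hσ
    obtain ⟨c', rfl⟩ := extreme_eq_fc hnq y c hτne hτconv hext
    exact (hmem _).2 ⟨y, hy, c', rfl⟩
  · -- common faces
    intro σ hσ τ hτ hne'
    obtain ⟨y, hy, c, rfl⟩ := (hmem σ).1 hσ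
    obtain ⟨y', hy', c', rfl⟩ := (hmem τ).1 hτ
    have hdiff : ∀ i, ∃ k : ℤ, y' i - y i = k * nq i := by
      intro i
      obtain ⟨k, hk⟩ := hy i
      obtain ⟨l, hl⟩ := hy' i
      exact ⟨l - k, by rw [hk, hl]; push_cast; ring⟩
    have hdiff' : ∀ i, ∃ k : ℤ, y i - y' i = k * nq i := by
      intro i
      obtain ⟨k, hk⟩ := hdiff i
      exact ⟨-k, by rw [← neg_sub, hk]; push_cast; ring⟩
    constructor
    · exact fc_inter_extreme hnq hdiff hne'
    · rw [Set.inter_comm]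
      exact fc_inter_extreme hnq hdiff' (by rwa [Set.inter_comm])
  · -- stability
    intro v hv σ hσ
    obtain ⟨y, hy, c, rfl⟩ := (hmem σ).1 hσ
    apply (hmem _).2
    refine ⟨fun i => v i + y i, ?_, c, ?_⟩
    · intro i
      obtain ⟨k, hk⟩ := mem_latticeY.1 hv i
      obtain ⟨l, hl⟩ := hy i
      refine ⟨k + l, ?_⟩
      show v i + y i = ((k + l : ℤ) : ℚ) * nq i
      rw [hk, hl]; push_cast; ring
    · rw [image_fc]
  · -- finitely many orbits
    refine ⟨Set.range (fun c : Fin d → Fin 3 => boxFace nq c), Set.finite_range _, ?_⟩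
    rintro σ ⟨y, hy, c, hσeq⟩
    exact ⟨boxFace nq c, ⟨c, rfl⟩, y, hy, hσeq⟩
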